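/- Consider the system dξ/dτ = θ(1 + ξ²), dθ/dτ = 1 + ξ² − θ² + ξθ², and let F(ξ,θ) = ((1 + ξ²)/(θ² − ξ² − 1))·exp(−2·arctan ξ) on the set G = {(ξ,θ) : θ² − ξ² ≠ 1}. Then F is differentiable on G and θ(1 + ξ²)·∂F/∂ξ(ξ,θ) + (1 + ξ² − θ² + ξθ²)·∂F/∂θ(ξ,θ) = 0 for all (ξ,θ) ∈ G; that is, F is a general autonomous integral of the system on any domain contained in G. -/

import Mathlib

/-- `F(ξ,θ) = ((1 + ξ²)/(θ² − ξ² − 1))·exp(−2·arctan ξ)`. -/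
noncomputable def F8 : ℝ × ℝ → ℝ :=
  fun p => ((1 + p.1 ^ 2) / (p.2 ^ 2 - p.1 ^ 2 - 1)) *
    Real.exp (-2 * Real.arctan p.1)

/-- `F` is a general autonomous integral of the system
`dξ/dτ = θ(1 + ξ²)`, `dθ/dτ = 1 + ξ² − θ² + ξθ²` on
`G = {(ξ,θ) : θ² − ξ² ≠ 1}`. -/
theorem F8_general_autonomous_integral :
    ∀ p : ℝ × ℝ, p.2 ^ 2 - p.1 ^ 2 ≠ 1 →
      DifferentiableAt ℝ F8 p ∧
      p.2 * (1 + p.1 ^ 2) * fderiv ℝ F8 p (1, 0) +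
        (1 + p.1 ^ 2 - p.2 ^ 2 + p.1 * p.2 ^ 2) * fderiv ℝ F8 p (0, 1) = 0 := by
  intro p hp
  set x := p.1 with hxdef
  set y := p.2 with hydef
  have hvne : y ^ 2 - x ^ 2 - 1 ≠ 0 := by
    intro h; apply hp; linarith [h]
  have hune : (1 : ℝ) + x ^ 2 ≠ 0 := by positivity
  have hx : HasFDerivAt (fun q : ℝ × ℝ => q.1) (ContinuousLinearMap.fst ℝ ℝ ℝ) p :=
    hasFDerivAt_fst
  have hy : HasFDerivAt (fun q : ℝ × ℝ => q.2) (ContinuousLinearMap.snd ℝ ℝ ℝ) p :=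
    hasFDerivAt_snd
  have hx2 : HasFDerivAt (fun q : ℝ × ℝ => q.1 ^ 2)
      (((2 : ℕ) * x ^ 1) • ContinuousLinearMap.fst ℝ ℝ ℝ) p :=
    ((hasDerivAt_pow 2 x).comp_hasFDerivAt p hx :)
  have hy2 : HasFDerivAt (fun q : ℝ × ℝ => q.2 ^ 2)
      (((2 : ℕ) * y ^ 1) • ContinuousLinearMap.snd ℝ ℝ ℝ) p :=
    ((hasDerivAt_pow 2 y).comp_hasFDerivAt p hy :)
  have hu : HasFDerivAt (fun q : ℝ × ℝ => 1 + q.1 ^ 2)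
      (((2 : ℕ) * x ^ 1) • ContinuousLinearMap.fst ℝ ℝ ℝ) p := hx2.const_add 1
  have hv : HasFDerivAt (fun q : ℝ × ℝ => q.2 ^ 2 - q.1 ^ 2 - 1)
      ((((2 : ℕ) * y ^ 1) • ContinuousLinearMap.snd ℝ ℝ ℝ) -
        ((2 : ℕ) * x ^ 1) • ContinuousLinearMap.fst ℝ ℝ ℝ) p :=
    (hy2.sub hx2).sub_const 1
  have hinv : HasFDerivAt (fun q : ℝ × ℝ => (q.2 ^ 2 - q.1 ^ 2 - 1)⁻¹)
      ((-((y ^ 2 - x ^ 2 - 1) ^ 2)⁻¹) •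
        ((((2 : ℕ) * y ^ 1) • ContinuousLinearMap.snd ℝ ℝ ℝ) -
          ((2 : ℕ) * x ^ 1) • ContinuousLinearMap.fst ℝ ℝ ℝ)) p :=
    (hasDerivAt_inv hvne).comp_hasFDerivAt p hv
  have hat : HasFDerivAt (fun q : ℝ × ℝ => Real.arctan q.1)
      ((1 / (1 + x ^ 2)) • ContinuousLinearMap.fst ℝ ℝ ℝ) p :=
    ((Real.hasDerivAt_arctan x).comp_hasFDerivAt p hx :)
  have hat2 : HasFDerivAt (fun q : ℝ × ℝ => -2 * Real.arctan q.1)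
      ((-2 : ℝ) • ((1 / (1 + x ^ 2)) • ContinuousLinearMap.fst ℝ ℝ ℝ)) p :=
    hat.const_mul (-2)
  have hexp : HasFDerivAt (fun q : ℝ × ℝ => Real.exp (-2 * Real.arctan q.1))
      (Real.exp (-2 * Real.arctan x) •
        ((-2 : ℝ) • ((1 / (1 + x ^ 2)) • ContinuousLinearMap.fst ℝ ℝ ℝ))) p :=
    ((Real.hasDerivAt_exp (-2 * Real.arctan x)).comp_hasFDerivAt p hat2 :)
  have hdiv := hu.mul hinv
  have hF := hdiv.mul hexp
  have hFeq : F8 = fun q : ℝ × ℝ =>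
      (1 + q.1 ^ 2) * (q.2 ^ 2 - q.1 ^ 2 - 1)⁻¹ * Real.exp (-2 * Real.arctan q.1) := by
    funext q; simp [F8, div_eq_mul_inv]
  rw [hFeq]
  refine ⟨hF.differentiableAt, ?_⟩
  erw [hF.fderiv]
  set E := Real.exp (-2 * Real.arctan x) with hE
  simp only [ContinuousLinearMap.add_apply, ContinuousLinearMap.smul_apply,
    ContinuousLinearMap.sub_apply, ContinuousLinearMap.coe_smul', Pi.smul_apply,
    ContinuousLinearMap.coe_fst', ContinuousLinearMap.coe_snd', smul_eq_mul, Pi.mul_apply]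
  simp only [← hxdef, ← hydef]
  field_simp
  ring
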